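/- Let v : 2^[m] → ℝ be a fractionally subadditive (XOS) valuation, i.e. there is a finite nonempty family of additive set functions ξ_k with v(S) = max_k ξ_k(S) for all S, where each ξ_k is additive with nonnegative values on singletons. Then for every set S ⊆ [m], v(S) ≥ ∑_{j ∈ [m]} (v(S) − v(S \ {j})). -/
import Mathlib


theorem stmt1 (m : ℕ) (ι : Type*) [Fintype ι] [Nonempty ι]
    (ξ : ι → Fin m → ℝ) (hξ : ∀ k j, 0 ≤ ξ k j)
    (v : Finset (Fin m) → ℝ)
    (hv : ∀ S : Finset (Fin m),
      v S = Finset.univ.sup' Finset.univ_nonempty (fun k => ∑ j ∈ S, ξ k j)) :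
    ∀ S : Finset (Fin m), v S ≥ ∑ j : Fin m, (v S - v (S.erase j)) := by
  intro S
  obtain ⟨k, -, hk⟩ := Finset.exists_mem_eq_sup' (Finset.univ_nonempty (α := ι))
    (fun k => ∑ j ∈ S, ξ k j)
  have hvS : v S = ∑ j ∈ S, ξ k j := by rw [hv S, hk]
  have hsum : ∑ j : Fin m, (v S - v (S.erase j)) = ∑ j ∈ S, (v S - v (S.erase j)) := by
    refine (Finset.sum_subset (Finset.subset_univ S) ?_).symm
    intro j _ hj
    rw [Finset.erase_eq_of_notMem hj, sub_self]
  rw [ge_iff_le, hsum]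
  calc ∑ j ∈ S, (v S - v (S.erase j)) ≤ ∑ j ∈ S, ξ k j := by
        refine Finset.sum_le_sum fun j hj => ?_
        have h1 : ∑ i ∈ S.erase j, ξ k i ≤ v (S.erase j) := by
          rw [hv]
          exact Finset.le_sup' (fun k => ∑ i ∈ S.erase j, ξ k i) (Finset.mem_univ k)
        have h2 : ∑ i ∈ S.erase j, ξ k i = (∑ i ∈ S, ξ k i) - ξ k j :=
          Finset.sum_erase_eq_sub hj
        rw [hvS]
        linarith
    _ = v S := hvS.symm
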